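/- Let Q be a lower transition rate operator on a finite nonempty set 𝒳, with conjugate Q̄ f := −Q(−f), and let (T_t)_{t≥0} be the associated family of operators determined by the differential equation d/dt T_t f = Q(T_t f) with T_0 f = f, and T̄_t f := −T_t(−f). Then for any t > 0 and any x, y ∈ 𝒳: T̄_t 𝟙_x(y) > 0 if and only if x is upper reachable from y, i.e. if and only if there is a finite sequence y = x_0, x_1, …, x_n = x (n ≥ 0) with x_k ≠ x_{k−1} and Q̄(𝟙_{x_k})(x_{k−1}) > 0 for all k ∈ {1,…,n}. -/

import Mathlib

open Filter Topology

/-- The minimum of a real-valued function on a finite nonempty type. -/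
noncomputable def minf {X : Type*} [Fintype X] [Nonempty X] (f : X → ℝ) : ℝ :=
  Finset.univ.inf' Finset.univ_nonempty f

/-- The maximum of a real-valued function on a finite nonempty type. -/
noncomputable def maxf {X : Type*} [Fintype X] [Nonempty X] (f : X → ℝ) : ℝ :=
  Finset.univ.sup' Finset.univ_nonempty f

/-- The (real-valued) indicator function of a set. -/
noncomputable def ind {X : Type*} (A : Set X) : X → ℝ := A.indicator 1

/-- The conjugate (upper) operator `f ↦ -(Q (-f))`. -/
def conjOp {X : Type*} (Q : (X → ℝ) → (X → ℝ)) : (X → ℝ) → (X → ℝ) :=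
  fun f => -(Q (-f))

/-- A lower transition rate operator. -/
def IsLTRO {X : Type*} [Fintype X] (Q : (X → ℝ) → (X → ℝ)) : Prop :=
  (∀ μ : ℝ, Q (fun _ => μ) = 0) ∧
  (∀ f g : X → ℝ, Q f + Q g ≤ Q (f + g)) ∧
  (∀ l : ℝ, 0 ≤ l → ∀ f : X → ℝ, Q (l • f) = l • Q f) ∧
  (∀ x y : X, x ≠ y → 0 ≤ Q (ind {y}) x)

/-- A lower transition operator. -/
def IsLTO {X : Type*} [Fintype X] [Nonempty X] (T : (X → ℝ) → (X → ℝ)) : Prop :=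
  (∀ f : X → ℝ, ∀ x : X, minf f ≤ T f x) ∧
  (∀ f g : X → ℝ, T f + T g ≤ T (f + g)) ∧
  (∀ l : ℝ, 0 ≤ l → ∀ f : X → ℝ, T (l • f) = l • T f)

/-- `T` is the family of operators solving `d/dt T_t f = Q (T_t f)` on `[0,∞)`
with `T_0 f = f`. -/
def IsSol {X : Type*} [Fintype X] (Q : (X → ℝ) → (X → ℝ))
    (T : ℝ → (X → ℝ) → (X → ℝ)) : Prop :=
  (∀ f : X → ℝ, T 0 f = f) ∧
  (∀ f : X → ℝ, ∀ t : ℝ, 0 ≤ t →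
    HasDerivWithinAt (fun s => T s f) (Q (T t f)) (Set.Ici 0) t)

/-- Ergodicity of a lower transition rate operator, expressed via its
associated time-dependent family `T`. -/
def ErgodicQ {X : Type*} [Fintype X] (T : ℝ → (X → ℝ) → (X → ℝ)) : Prop :=
  ∀ f : X → ℝ, ∃ c : ℝ, Tendsto (fun t => T t f) atTop (𝓝 (fun _ : X => c))

/-- Ergodicity of a lower transition operator. -/
def ErgodicT {X : Type*} [Fintype X] (T : (X → ℝ) → (X → ℝ)) : Prop :=
  ∀ f : X → ℝ, ∃ c : ℝ, Tendsto (fun n : ℕ => T^[n] f) atTop (𝓝 (fun _ : X => c))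

/-- `x` is upper reachable from `y` (w.r.t. the lower transition rate operator `Q`). -/
def upperReach {X : Type*} [Fintype X] (Q : (X → ℝ) → (X → ℝ)) (y x : X) : Prop :=
  ∃ (n : ℕ) (p : ℕ → X), p 0 = y ∧ p n = x ∧
    ∀ k : ℕ, k < n → p (k + 1) ≠ p k ∧ 0 < conjOp Q (ind {p (k + 1)}) (p k)

/-- One step of the lower-reachability construction: `A ↦ A ∪ {y ∉ A : Q(𝟙_A)(y) > 0}`. -/
def lowerStep {X : Type*} [Fintype X] (Q : (X → ℝ) → (X → ℝ)) (A : Set X) : Set X :=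
  A ∪ {y : X | y ∉ A ∧ 0 < Q (ind A) y}

/-- `A` is lower reachable from `x`: `x ∈ Aₙ` where `n` is the first index with
`Aₙ = Aₙ₊₁` (equivalently, any such index, since the sequence is determined by
recursion and increasing). -/
def lowerReach {X : Type*} [Fintype X] (Q : (X → ℝ) → (X → ℝ)) (x : X) (A : Set X) : Prop :=
  ∃ n : ℕ, (lowerStep Q)^[n] A = (lowerStep Q)^[n + 1] A ∧ x ∈ (lowerStep Q)^[n] A

/-- The set `𝒳_RA := {x : ∃ n ≥ 1, min T̄ⁿ 𝟙ₓ > 0}`. -/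
noncomputable def XRA {X : Type*} [Fintype X] [Nonempty X]
    (T : (X → ℝ) → (X → ℝ)) : Set X :=
  {x : X | ∃ n : ℕ, 0 < minf ((conjOp T)^[n + 1] (ind {x}))}

/-- A regularly absorbing lower transition operator. -/
def RegAbs {X : Type*} [Fintype X] [Nonempty X] (T : (X → ℝ) → (X → ℝ)) : Prop :=
  (XRA T).Nonempty ∧ ∀ x : X, x ∉ XRA T → ∃ n : ℕ, 0 < T^[n + 1] (ind (XRA T)) x

/-- The set `𝒳_1A := {x : min T̄ 𝟙ₓ > 0}`. -/
noncomputable def X1A {X : Type*} [Fintype X] [Nonempty X]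
    (T : (X → ℝ) → (X → ℝ)) : Set X :=
  {x : X | 0 < minf (conjOp T (ind {x}))}

/-- A 1-step absorbing lower transition operator. -/
def OneStepAbs {X : Type*} [Fintype X] [Nonempty X] (T : (X → ℝ) → (X → ℝ)) : Prop :=
  (X1A T).Nonempty ∧ ∀ x : X, x ∉ X1A T → 0 < T (ind (X1A T)) x

/-- The operator (sup) norm of a non-negatively homogeneous operator. -/
noncomputable def opN {X : Type*} [Fintype X] (Q : (X → ℝ) → (X → ℝ)) : ℝ :=
  sSup {r : ℝ | ∃ f : X → ℝ, ‖f‖ = 1 ∧ r = ‖Q f‖}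

section Helpers
set_option linter.unusedSectionVars false

open Set

variable {X : Type*} [Fintype X] [Nonempty X] {Q : (X → ℝ) → (X → ℝ)}

lemma ind_self (z : X) : ind ({z} : Set X) z = 1 := by
  simp [ind]

lemma ind_ne {z w : X} (h : w ≠ z) : ind ({z} : Set X) w = 0 := by
  simp [ind, Set.indicator_apply, h]

lemma ind_nonneg (z w : X) : 0 ≤ ind ({z} : Set X) w := by
  rcases eq_or_ne w z with rfl | h
  · rw [ind_self]; norm_num
  · rw [ind_ne h]

lemma sum_smul_ind (f : X → ℝ) : ∑ z : X, f z • ind ({z} : Set X) = f := by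
  classical
  funext w
  rw [Finset.sum_apply]
  have e : ∀ z : X, (f z • ind ({z} : Set X)) w = if w = z then f w else 0 := by
    intro z
    rcases eq_or_ne w z with rfl | h
    · simp [ind_self]
    · simp [ind_ne h, h]
  rw [Finset.sum_congr rfl (fun z _ => e z), Finset.sum_ite_eq]
  simp

lemma lQ_zero (hQ : IsLTRO Q) : Q 0 = 0 := hQ.1 0

lemma lQ_sum_le (hQ : IsLTRO Q) {ι : Type*} (s : Finset ι) (g : ι → X → ℝ) :
    ∑ i ∈ s, Q (g i) ≤ Q (∑ i ∈ s, g i) := by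
  classical
  induction s using Finset.induction_on with
  | empty => simp [lQ_zero hQ]
  | insert _ _ hns ih =>
      rw [Finset.sum_insert hns, Finset.sum_insert hns]
      exact le_trans (add_le_add_right ih _) (hQ.2.1 _ _)

lemma lQ_smul (hQ : IsLTRO Q) {a : ℝ} (ha : 0 ≤ a) (f : X → ℝ) :
    Q (a • f) = a • Q f := hQ.2.2.1 a ha f

lemma lQ_smul_neg (hQ : IsLTRO Q) {a : ℝ} (ha : a < 0) (f : X → ℝ) :
    Q (a • f) = a • conjOp Q f := by
  have h1 : a • f = (-a) • (-f) := (neg_smul_neg a f).symm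
  rw [h1, hQ.2.2.1 (-a) (by linarith) (-f)]
  simp only [conjOp, smul_neg, neg_smul, neg_neg]

lemma lQb_smul (hQ : IsLTRO Q) {a : ℝ} (ha : 0 ≤ a) (f : X → ℝ) :
    conjOp Q (a • f) = a • conjOp Q f := by
  simp only [conjOp]
  rw [← smul_neg, hQ.2.2.1 a ha, smul_neg]

lemma lQb_smul_neg (hQ : IsLTRO Q) {a : ℝ} (ha : a < 0) (f : X → ℝ) :
    conjOp Q (a • f) = a • Q f := by
  simp only [conjOp]
  have h1 : -(a • f) = (-a) • f := (neg_smul a f).symm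
  rw [h1, hQ.2.2.1 (-a) (by linarith) f, neg_smul, neg_neg]

lemma lQ_le_conj (hQ : IsLTRO Q) (f : X → ℝ) (y : X) : Q f y ≤ conjOp Q f y := by
  have h := hQ.2.1 f (-f)
  have h2 : f + -f = (0 : X → ℝ) := by abel
  rw [h2, lQ_zero hQ] at h
  have hy := h y
  simp only [Pi.add_apply, Pi.zero_apply] at hy
  simp only [conjOp, Pi.neg_apply]
  linarith

lemma lQb_subadd (hQ : IsLTRO Q) (f g : X → ℝ) (y : X) :
    conjOp Q (f + g) y ≤ conjOp Q f y + conjOp Q g y := by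
  have h := (hQ.2.1 (-f) (-g)) y
  simp only [Pi.add_apply] at h
  have h2 : -f + -g = -(f + g) := by abel
  rw [h2] at h
  simp only [conjOp, Pi.neg_apply]
  linarith

lemma lQb_neg (Q : (X → ℝ) → (X → ℝ)) (f : X → ℝ) : conjOp Q (-f) = -(Q f) := by
  simp [conjOp]

lemma lQ_expand (hQ : IsLTRO Q) (f : X → ℝ) (y : X) :
    ∑ z : X, Q (f z • ind {z}) y ≤ Q f y := by
  have h := lQ_sum_le hQ Finset.univ (fun z => f z • ind ({z} : Set X))
  rw [sum_smul_ind] at h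
  have hy := h y
  simpa [Finset.sum_apply] using hy

lemma lQb_expand (hQ : IsLTRO Q) (f : X → ℝ) (y : X) :
    conjOp Q f y ≤ ∑ z : X, conjOp Q (f z • ind {z}) y := by
  have h := lQ_expand hQ (-f) y
  have e : ∀ z : X, (-f) z • ind ({z} : Set X) = -(f z • ind {z}) := by
    intro z; rw [Pi.neg_apply, neg_smul]
  simp only [e] at h
  simp only [conjOp, Pi.neg_apply]
  have : ∑ z : X, -(Q (-(f z • ind ({z} : Set X))) y) = -∑ z : X, Q (-(f z • ind ({z} : Set X))) y := by
    rw [Finset.sum_neg_distrib]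
  rw [this]
  linarith

end Helpers
section Bounds
set_option linter.unusedSectionVars false

variable {X : Type*} [Fintype X] [Nonempty X] {Q : (X → ℝ) → (X → ℝ)}

/-- Per-state constant. -/
noncomputable def Kf (Q : (X → ℝ) → (X → ℝ)) (z : X) : ℝ :=
  ‖Q (ind ({z} : Set X))‖ + ‖conjOp Q (ind ({z} : Set X))‖

/-- Global constant. -/
noncomputable def Cst {X : Type*} [Fintype X] (Q : (X → ℝ) → (X → ℝ)) : ℝ :=
  ∑ z : X, Kf Q z

lemma Kf_nonneg (Q : (X → ℝ) → (X → ℝ)) (z : X) : 0 ≤ Kf Q z := by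
  unfold Kf; positivity

lemma Cst_nonneg (Q : (X → ℝ) → (X → ℝ)) : 0 ≤ Cst Q :=
  Finset.sum_nonneg fun z _ => Kf_nonneg Q z

lemma Kf_le_Cst (Q : (X → ℝ) → (X → ℝ)) (z : X) : Kf Q z ≤ Cst Q :=
  Finset.single_le_sum (fun i _ => Kf_nonneg Q i) (Finset.mem_univ z)

lemma abs_Q_ind_le (Q : (X → ℝ) → (X → ℝ)) (z y : X) : |Q (ind ({z} : Set X)) y| ≤ Kf Q z := by
  calc |Q (ind ({z} : Set X)) y| = ‖Q (ind ({z} : Set X)) y‖ := (Real.norm_eq_abs _).symm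
    _ ≤ ‖Q (ind ({z} : Set X))‖ := norm_le_pi_norm _ y
    _ ≤ Kf Q z := le_add_of_nonneg_right (norm_nonneg _)

lemma abs_Qb_ind_le (Q : (X → ℝ) → (X → ℝ)) (z y : X) :
    |conjOp Q (ind ({z} : Set X)) y| ≤ Kf Q z := by
  calc |conjOp Q (ind ({z} : Set X)) y| = ‖conjOp Q (ind ({z} : Set X)) y‖ :=
        (Real.norm_eq_abs _).symm
    _ ≤ ‖conjOp Q (ind ({z} : Set X))‖ := norm_le_pi_norm _ y
    _ ≤ Kf Q z := le_add_of_nonneg_left (norm_nonneg _)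

lemma abs_term_le (hQ : IsLTRO Q) (a : ℝ) (z y : X) :
    |Q (a • ind ({z} : Set X)) y| ≤ |a| * Kf Q z ∧
      |conjOp Q (a • ind ({z} : Set X)) y| ≤ |a| * Kf Q z := by
  rcases le_or_gt 0 a with h | h
  · rw [lQ_smul hQ h, lQb_smul hQ h]
    simp only [Pi.smul_apply, smul_eq_mul, abs_mul]
    constructor
    · exact mul_le_mul_of_nonneg_left (abs_Q_ind_le Q z y) (abs_nonneg a)
    · exact mul_le_mul_of_nonneg_left (abs_Qb_ind_le Q z y) (abs_nonneg a)
  · rw [lQ_smul_neg hQ h, lQb_smul_neg hQ h]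
    simp only [Pi.smul_apply, smul_eq_mul, abs_mul]
    constructor
    · exact mul_le_mul_of_nonneg_left (abs_Qb_ind_le Q z y) (abs_nonneg a)
    · exact mul_le_mul_of_nonneg_left (abs_Q_ind_le Q z y) (abs_nonneg a)

lemma term_closed (hQ : IsLTRO Q) {z y : X} (hzy : z ≠ y)
    (hzero : conjOp Q (ind ({z} : Set X)) y = 0) (a : ℝ) :
    0 ≤ Q (a • ind ({z} : Set X)) y ∧ conjOp Q (a • ind ({z} : Set X)) y ≤ 0 := by
  have hpos : 0 ≤ Q (ind ({z} : Set X)) y := hQ.2.2.2 y z (Ne.symm hzy)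
  rcases le_or_gt 0 a with h | h
  · rw [lQ_smul hQ h, lQb_smul hQ h]
    simp only [Pi.smul_apply, smul_eq_mul, hzero, mul_zero]
    exact ⟨mul_nonneg h hpos, le_refl 0⟩
  · rw [lQ_smul_neg hQ h, lQb_smul_neg hQ h]
    simp only [Pi.smul_apply, smul_eq_mul, hzero, mul_zero]
    exact ⟨le_refl 0, mul_nonpos_of_nonpos_of_nonneg h.le hpos⟩

/-- Bound used in the vanishing direction. -/
lemma vanish_bound (hQ : IsLTRO Q) (P : X → Prop)
    (hcl : ∀ z, P z → ∀ w, ¬ P w → conjOp Q (ind ({z} : Set X)) w = 0)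
    {u : ℝ} (hu : 0 ≤ u) (f : X → ℝ) (hf : ∀ z, ¬ P z → |f z| ≤ u)
    {y : X} (hy : ¬ P y) : |conjOp Q f y| ≤ Cst Q * u := by
  classical
  have hterm : ∀ z : X, Q (f z • ind ({z} : Set X)) y ≥ -(u * Kf Q z) ∧
      conjOp Q (f z • ind ({z} : Set X)) y ≤ u * Kf Q z := by
    intro z
    by_cases hz : P z
    · have hzy : z ≠ y := fun h => hy (h ▸ hz)
      have h0 := term_closed hQ hzy (hcl z hz y hy) (f z)
      constructor
      · have : 0 ≤ u * Kf Q z := mul_nonneg hu (Kf_nonneg Q z)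
        linarith [h0.1]
      · have : 0 ≤ u * Kf Q z := mul_nonneg hu (Kf_nonneg Q z)
        linarith [h0.2]
    · have h0 := abs_term_le hQ (f z) z y
      have hfz : |f z| ≤ u := hf z hz
      have h1 : |f z| * Kf Q z ≤ u * Kf Q z :=
        mul_le_mul_of_nonneg_right hfz (Kf_nonneg Q z)
      constructor
      · have := abs_le.1 h0.1
        linarith [this.1]
      · have := abs_le.1 h0.2
        linarith [this.2]
  have hsum : Cst Q * u = ∑ z : X, u * Kf Q z := by
    unfold Cst
    rw [Finset.sum_mul]
    exact Finset.sum_congr rfl fun z _ => by ring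
  rw [abs_le]
  constructor
  · have h1 := lQ_expand hQ f y
    have h2 : ∑ z : X, Q (f z • ind ({z} : Set X)) y ≥ -(Cst Q * u) := by
      rw [hsum, ← Finset.sum_neg_distrib]
      exact Finset.sum_le_sum fun z _ => (hterm z).1
    have h3 := lQ_le_conj hQ f y
    linarith
  · have h1 := lQb_expand hQ f y
    have h2 : ∑ z : X, conjOp Q (f z • ind ({z} : Set X)) y ≤ Cst Q * u := by
      rw [hsum]
      exact Finset.sum_le_sum fun z _ => (hterm z).2
    linarith

/-- For nonnegative `f`, `Q f y ≥ -C f(y)`. -/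
lemma lQ_ge_of_nonneg (hQ : IsLTRO Q) (f : X → ℝ) (hf : ∀ z, 0 ≤ f z) (y : X) :
    -(Cst Q * f y) ≤ Q f y := by
  classical
  have h1 := lQ_expand hQ f y
  have hterm : ∀ z ∈ Finset.univ.erase y, 0 ≤ Q (f z • ind ({z} : Set X)) y := by
    intro z hz
    have hzy : z ≠ y := Finset.ne_of_mem_erase hz
    rw [lQ_smul hQ (hf z)]
    simp only [Pi.smul_apply, smul_eq_mul]
    exact mul_nonneg (hf z) (hQ.2.2.2 y z (Ne.symm hzy))
  have hy : -(Cst Q * f y) ≤ Q (f y • ind ({y} : Set X)) y := by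
    rw [lQ_smul hQ (hf y)]
    simp only [Pi.smul_apply, smul_eq_mul]
    have habs : |Q (ind ({y} : Set X)) y| ≤ Cst Q := (abs_Q_ind_le Q y y).trans (Kf_le_Cst Q y)
    have h2 : -(Cst Q) ≤ Q (ind ({y} : Set X)) y := by
      have := abs_le.1 habs; linarith [this.1]
    nlinarith [hf y]
  calc -(Cst Q * f y) ≤ ∑ z : X, Q (f z • ind ({z} : Set X)) y := by
        rw [← Finset.add_sum_erase _ _ (Finset.mem_univ y)]
        have := Finset.sum_nonneg hterm
        linarith
    _ ≤ Q f y := h1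

/-- Step bound: `Q̄ f (w) ≥ f z Q̄(1_z)(w) - C f(w)` for nonnegative `f`, `z ≠ w`. -/
lemma lQb_step_bound (hQ : IsLTRO Q) (f : X → ℝ) (hf : ∀ z, 0 ≤ f z) {z w : X} (hzw : z ≠ w) :
    f z * conjOp Q (ind ({z} : Set X)) w - Cst Q * f w ≤ conjOp Q f w := by
  have h := lQb_subadd hQ f (f z • ind ({z} : Set X) - f) w
  have e1 : f + (f z • ind ({z} : Set X) - f) = f z • ind ({z} : Set X) := by abel
  rw [e1] at h
  have e2 : f z • ind ({z} : Set X) - f = -(f - f z • ind ({z} : Set X)) := by abel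
  rw [e2, lQb_neg] at h
  -- h : conjOp Q (f z • ind {z}) w ≤ conjOp Q f w + (-(Q (f - f z • ind {z}))) w
  simp only [Pi.neg_apply] at h
  have hphi : ∀ v : X, 0 ≤ (f - f z • ind ({z} : Set X)) v := by
    intro v
    rcases eq_or_ne v z with rfl | hv
    · simp [ind_self]
    · simp [ind_ne hv, hf v]
  have hP1 := lQ_ge_of_nonneg hQ (f - f z • ind ({z} : Set X)) hphi w
  have hphiw : (f - f z • ind ({z} : Set X)) w = f w := by
    simp [ind_ne (Ne.symm hzw)]
  rw [hphiw] at hP1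
  have e3 : conjOp Q (f z • ind ({z} : Set X)) w = f z * conjOp Q (ind ({z} : Set X)) w := by
    rw [lQb_smul hQ (hf z)]; simp
  rw [e3] at h
  linarith

/-- At a maximizer, `Q v ≤ 0`. -/
lemma lQ_argmax_nonpos (hQ : IsLTRO Q) (v : X → ℝ) (x : X) (hx : ∀ w, v w ≤ v x) :
    Q v x ≤ 0 := by
  classical
  set h : X → ℝ := fun w => v x - v w with hh
  have hsum : v + h = fun _ => v x := by funext w; simp [hh]
  have h1 := hQ.2.1 v h
  rw [hsum, hQ.1 (v x)] at h1
  have h2 : 0 ≤ Q h x := by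
    refine le_trans (Finset.sum_nonneg ?_) (lQ_expand hQ h x)
    intro z _
    rcases eq_or_ne z x with rfl | hzx
    · have hz0 : h z = 0 := by simp [hh]
      rw [hz0, zero_smul, lQ_zero hQ]
      simp
    · rw [lQ_smul hQ (by simp [hh, hx z])]
      simp only [Pi.smul_apply, smul_eq_mul]
      exact mul_nonneg (by simp [hh, hx z]) (hQ.2.2.2 x z (Ne.symm hzx))
  have h3 := h1 x
  simp only [Pi.add_apply, Pi.zero_apply] at h3
  linarith

end Bounds
section Calc
set_option linter.unusedSectionVars false
open Set

variable {X : Type*} [Fintype X] [Nonempty X] {Q : (X → ℝ) → (X → ℝ)}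
  {T : ℝ → (X → ℝ) → (X → ℝ)}

lemma Tderiv (hT : IsSol Q T) (f : X → ℝ) {t : ℝ} (ht : 0 ≤ t) (y : X) :
    HasDerivWithinAt (fun s => T s f y) (Q (T t f) y) (Set.Ici 0) t :=
  (hasDerivWithinAt_pi.1 (hT.2 f t ht)) y

lemma Tcont (hT : IsSol Q T) (f : X → ℝ) (y : X) {D : Set ℝ} (hD : D ⊆ Set.Ici 0) :
    ContinuousOn (fun s => T s f y) D := fun s hs =>
  ((Tderiv hT f (hD hs) y).continuousWithinAt).mono hD

lemma le_maxf (f : X → ℝ) (y : X) : f y ≤ maxf f := Finset.le_sup' f (Finset.mem_univ y)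

lemma maxf_le {f : X → ℝ} {a : ℝ} (h : ∀ y, f y ≤ a) : maxf f ≤ a :=
  Finset.sup'_le _ _ fun y _ => h y

lemma maxf_lt_iff {f : X → ℝ} {a : ℝ} : maxf f < a ↔ ∀ y, f y < a := by
  rw [maxf, Finset.sup'_lt_iff]; simp

lemma contOn_maxf {u : ℝ → X → ℝ} {D : Set ℝ}
    (h : ∀ y : X, ContinuousOn (fun s => u s y) D) :
    ContinuousOn (fun s => maxf (u s)) D :=
  ContinuousOn.finset_sup'_apply Finset.univ_nonempty (fun y _ => h y)

lemma maxT_le (hQ : IsLTRO Q) (hT : IsSol Q T) (f : X → ℝ) {b : ℝ} (hb : 0 ≤ b) :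
    ∀ s ∈ Set.Icc (0:ℝ) b, maxf (T s f) ≤ maxf f := by
  have key : ∀ s ∈ Set.Icc (0:ℝ) b, maxf (T s f) ≤ gronwallBound (maxf f) 0 0 (s - 0) := by
    apply le_gronwallBound_of_liminf_deriv_right_le (f' := fun _ => (0:ℝ))
    · exact contOn_maxf fun y => Tcont hT f y (fun r hr => hr.1)
    · intro τ hτ r hr
      have hev : ∀ᶠ z in 𝓝[>] τ, ∀ w : X, T z f w < maxf (T τ f) + (z - τ) * r := by
        rw [eventually_all]
        intro w
        rcases lt_or_eq_of_le (le_maxf (T τ f) w) with hlt | heq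
        · have hcw : ContinuousWithinAt (fun s => T s f w) (Set.Ioi τ) τ :=
            ((Tderiv hT f hτ.1 w).continuousWithinAt).mono
              (fun z hz => le_trans hτ.1 (le_of_lt hz))
          have h1 : ∀ᶠ z in 𝓝[>] τ, T z f w < maxf (T τ f) :=
            Filter.Tendsto.eventually_lt_const hlt hcw
          filter_upwards [h1, self_mem_nhdsWithin] with z h1' h2'
          have : 0 < (z - τ) * r := mul_pos (sub_pos.2 h2') hr
          linarith
        · have hd : HasDerivWithinAt (fun s => T s f w) (Q (T τ f) w) (Set.Ici τ) τ :=
            (Tderiv hT f hτ.1 w).mono (Set.Ici_subset_Ici.2 hτ.1)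
          have hsl : Filter.Tendsto (slope (fun s => T s f w) τ) (𝓝[>] τ)
              (𝓝 (Q (T τ f) w)) := by
            have h2 := hasDerivWithinAt_iff_tendsto_slope.1 hd
            rwa [Set.Ici_sdiff_left] at h2
          have hneg : Q (T τ f) w ≤ 0 := by
            apply lQ_argmax_nonpos hQ
            intro v
            calc T τ f v ≤ maxf (T τ f) := le_maxf _ v
              _ = T τ f w := heq.symm
          have h1 : ∀ᶠ z in 𝓝[>] τ, slope (fun s => T s f w) τ z < r :=
            Filter.Tendsto.eventually_lt_const (lt_of_le_of_lt hneg hr) hsl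
          filter_upwards [h1, self_mem_nhdsWithin] with z h1' h2'
          have hzτ : 0 < z - τ := sub_pos.2 h2'
          rw [slope_def_field] at h1'
          have h3 := (div_lt_iff₀ hzτ).1 h1'
          have h4 : T τ f w = maxf (T τ f) := heq
          linarith
      refine Filter.Eventually.frequently ?_
      filter_upwards [hev, self_mem_nhdsWithin] with z hz h2
      have hzτ : 0 < z - τ := sub_pos.2 h2
      have hmax : maxf (T z f) < maxf (T τ f) + (z - τ) * r := maxf_lt_iff.2 hz
      calc (z - τ)⁻¹ * (maxf (T z f) - maxf (T τ f)) < (z - τ)⁻¹ * ((z - τ) * r) := by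
            apply mul_lt_mul_of_pos_left _ (inv_pos.2 hzτ); linarith
        _ = r := inv_mul_cancel_left₀ (ne_of_gt hzτ) r
    · rw [hT.1 f]
    · intro τ _; norm_num
  intro s hs
  have h := key s hs
  rw [gronwallBound_K0] at h
  simpa using h

lemma T_nonpos (hQ : IsLTRO Q) (hT : IsSol Q T) {f : X → ℝ} (hf : ∀ y, f y ≤ 0)
    {s : ℝ} (hs : 0 ≤ s) (y : X) : T s f y ≤ 0 :=
  le_trans (le_maxf _ y) (le_trans (maxT_le hQ hT f hs s ⟨hs, le_refl s⟩) (maxf_le hf))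

lemma deriv_conj (hT : IsSol Q T) (f : X → ℝ) {t : ℝ} (ht : 0 ≤ t) (y : X) :
    HasDerivWithinAt (fun s => conjOp (T s) f y) (conjOp Q (conjOp (T t) f) y)
      (Set.Ici 0) t := by
  have h := (Tderiv hT (-f) ht y).neg
  have e1 : (fun s => conjOp (T s) f y) = fun s => -(T s (-f) y) := by
    funext s; simp [conjOp]
  have e2 : conjOp Q (conjOp (T t) f) y = -(Q (T t (-f)) y) := by
    simp [conjOp, neg_neg]
  rw [e1, e2]; exact h

lemma conj_nonneg (hQ : IsLTRO Q) (hT : IsSol Q T) {f : X → ℝ} (hf : ∀ y, 0 ≤ f y)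
    {s : ℝ} (hs : 0 ≤ s) (y : X) : 0 ≤ conjOp (T s) f y := by
  have h : T s (-f) y ≤ 0 := T_nonpos hQ hT (fun y => by simpa using hf y) hs y
  simp only [conjOp, Pi.neg_apply]
  linarith

end Calc
section MainAux
set_option linter.unusedSectionVars false
open Set

variable {X : Type*} [Fintype X] [Nonempty X] {Q : (X → ℝ) → (X → ℝ)}
  {T : ℝ → (X → ℝ) → (X → ℝ)}

lemma upperReach_self (Q : (X → ℝ) → (X → ℝ)) (x : X) : upperReach Q x x :=
  ⟨0, fun _ => x, rfl, rfl, fun k hk => absurd hk (Nat.not_lt_zero k)⟩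

lemma upperReach_cons {x z w : X} (h : upperReach Q z x) (hzw : z ≠ w)
    (hpos : 0 < conjOp Q (ind ({z} : Set X)) w) : upperReach Q w x := by
  obtain ⟨n, p, hp0, hpn, hp⟩ := h
  refine ⟨n + 1, fun k => if k = 0 then w else p (k - 1), by simp, by simp [hpn], ?_⟩
  intro k hk
  rcases Nat.eq_zero_or_pos k with rfl | hkpos
  · simpa [hp0] using ⟨hzw, hpos⟩
  · obtain ⟨j, rfl⟩ : ∃ j, k = j + 1 := ⟨k - 1, (Nat.succ_pred_eq_of_pos hkpos).symm⟩
    have hj : j < n := by omega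
    simp only [if_neg (by omega : ¬ (j + 1 + 1 = 0)), if_neg (by omega : ¬ (j + 1 = 0)),
      Nat.add_sub_cancel]
    exact hp j hj

lemma conj_ind_eq_zero (hQ : IsLTRO Q) {x z w : X} (hz : upperReach Q z x)
    (hw : ¬ upperReach Q w x) : conjOp Q (ind ({z} : Set X)) w = 0 := by
  have hzw : z ≠ w := fun h => hw (h ▸ hz)
  refine le_antisymm ?_ ?_
  · by_contra h
    exact hw (upperReach_cons hz hzw (not_le.1 h))
  · exact le_trans (hQ.2.2.2 w z (Ne.symm hzw)) (lQ_le_conj hQ (ind {z}) w)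

/-- Monotonicity of `u ↦ exp(Cu) * T̄_u 1_x (w)` on `[0, t']`. -/
lemma expG_mono (hQ : IsLTRO Q) (hT : IsSol Q T) (x w : X) {t' : ℝ} (ht' : 0 ≤ t') :
    MonotoneOn (fun u => Real.exp (Cst Q * u) * conjOp (T u) (ind ({x} : Set X)) w)
      (Set.Icc 0 t') := by
  set g : ℝ → X → ℝ := fun s => conjOp (T s) (ind ({x} : Set X)) with hgdef
  have hgpos : ∀ s, 0 ≤ s → ∀ v, 0 ≤ g s v := fun s hs v =>
    conj_nonneg hQ hT (fun v' => ind_nonneg x v') hs v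
  have hgd : ∀ s, 0 ≤ s → HasDerivWithinAt (fun u => g u w) (conjOp Q (g s) w)
      (Set.Ici 0) s := fun s hs => deriv_conj hT _ hs w
  apply monotoneOn_of_hasDerivWithinAt_nonneg (convex_Icc 0 t')
      (f' := fun u => Real.exp (Cst Q * u) * (Cst Q * 1) * g u w
        + Real.exp (Cst Q * u) * conjOp Q (g u) w)
  · apply ContinuousOn.mul
    · exact (Real.continuous_exp.comp (continuous_const.mul continuous_id)).continuousOn
    · intro s hs
      exact ((hgd s hs.1).continuousWithinAt).mono (fun r hr => hr.1)
  · intro u hu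
    rw [interior_Icc] at hu
    have h1 : HasDerivAt (fun v : ℝ => Cst Q * v) (Cst Q * 1) u := (hasDerivAt_id u).const_mul _
    have h2 : HasDerivAt (fun v => Real.exp (Cst Q * v)) (Real.exp (Cst Q * u) * (Cst Q * 1)) u :=
      h1.exp
    have h3 : HasDerivAt (fun v => g v w) (conjOp Q (g u) w) u := by
      have hmem : Set.Ici (0:ℝ) ∈ 𝓝 u :=
        Filter.mem_of_superset (isOpen_Ioi.mem_nhds hu.1) Set.Ioi_subset_Ici_self
      exact (hgd u hu.1.le).hasDerivAt hmem
    exact (h2.mul h3).hasDerivWithinAt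
  · intro u hu
    rw [interior_Icc] at hu
    have hQle : -(Cst Q * g u w) ≤ Q (g u) w := lQ_ge_of_nonneg hQ (g u) (hgpos u hu.1.le) w
    have hconj : Q (g u) w ≤ conjOp Q (g u) w := lQ_le_conj hQ (g u) w
    have hE := (Real.exp_pos (Cst Q * u)).le
    nlinarith [mul_le_mul_of_nonneg_left (le_trans hQle hconj) hE]

end MainAux
/-- For any `t > 0` and states `x, y`: `T̄_t 𝟙ₓ (y) > 0` iff `x` is upper
reachable from `y`. -/
theorem stmt3 {X : Type*} [Fintype X] [Nonempty X]
    (Q : (X → ℝ) → (X → ℝ)) (hQ : IsLTRO Q)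
    (T : ℝ → (X → ℝ) → (X → ℝ)) (hT : IsSol Q T)
    (t : ℝ) (ht : 0 < t) (x y : X) :
    0 < conjOp (T t) (ind {x}) y ↔ upperReach Q y x := by
  classical
  set g : ℝ → X → ℝ := fun s => conjOp (T s) (ind ({x} : Set X)) with hgdef
  have hg0 : ∀ w, g 0 w = ind ({x} : Set X) w := by
    intro w; simp [hgdef, conjOp, hT.1]
  have hgpos : ∀ s, 0 ≤ s → ∀ w, 0 ≤ g s w := fun s hs w =>
    conj_nonneg hQ hT (fun v => ind_nonneg x v) hs w
  have hgd : ∀ s, 0 ≤ s → ∀ w, HasDerivWithinAt (fun u => g u w) (conjOp Q (g s) w)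
      (Set.Ici 0) s := fun s hs w => deriv_conj hT _ hs w
  -- Part 1: vanishing on non-reachable states
  have vanish : ∀ w, ¬ upperReach Q w x → g t w = 0 := by
    intro y0 hy0
    haveI : Fintype {w : X // ¬ upperReach Q w x} := Fintype.ofFinite _
    set h : ℝ → {w : X // ¬ upperReach Q w x} → ℝ := fun s e => g s e.1 with hhdef
    have key : ∀ s ∈ Set.Icc (0:ℝ) t, ‖h s‖ ≤ gronwallBound 0 (Cst Q) 0 (s - 0) := by
      apply norm_le_gronwallBound_of_norm_deriv_right_le
        (f' := fun s e => conjOp Q (g s) e.1)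
      · intro s hs
        apply continuousWithinAt_pi.2
        intro e
        exact (((hgd s hs.1 e.1).continuousWithinAt).mono (fun r hr => hr.1))
      · intro s hs
        apply hasDerivWithinAt_pi.2
        intro e
        exact (hgd s hs.1 e.1).mono (Set.Ici_subset_Ici.2 hs.1)
      · have he : h 0 = 0 := by
          funext e
          have hne : e.1 ≠ x := fun hh' => e.2 (by rw [hh']; exact upperReach_self Q x)
          simp [hhdef, hg0, ind_ne hne]
        rw [he]; simp
      · intro s hs
        have hnn : (0:ℝ) ≤ Cst Q * ‖h s‖ := mul_nonneg (Cst_nonneg Q) (norm_nonneg _)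
        rw [add_zero]
        apply (pi_norm_le_iff_of_nonneg hnn).2
        intro e
        rw [Real.norm_eq_abs]
        have hb := vanish_bound hQ (fun w => upperReach Q w x)
          (fun z hz w hw => conj_ind_eq_zero hQ hz hw) (norm_nonneg (h s)) (g s)
          (fun z hz => by
            have := norm_le_pi_norm (h s) ⟨z, hz⟩
            rwa [Real.norm_eq_abs] at this) e.2
        exact hb
    have ht' := key t ⟨le_of_lt ht, le_refl t⟩
    rw [sub_zero, gronwallBound_ε0_δ0] at ht'
    have h0 : |h t ⟨y0, hy0⟩| ≤ 0 := by
      have := norm_le_pi_norm (h t) ⟨y0, hy0⟩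
      rw [Real.norm_eq_abs] at this
      linarith
    exact abs_eq_zero.1 (le_antisymm h0 (abs_nonneg _))
  -- Part 2: positivity on reachable states
  have Sbase : ∀ s, 0 < s → 0 < g s x := by
    intro t' ht'
    have hmono := expG_mono hQ hT x x (le_of_lt ht')
    have h01 : (0:ℝ) ∈ Set.Icc (0:ℝ) t' := ⟨le_refl 0, ht'.le⟩
    have ht'1 : t' ∈ Set.Icc (0:ℝ) t' := ⟨ht'.le, le_refl t'⟩
    have hle : g 0 x ≤ Real.exp (Cst Q * t') * g t' x := by
      have h2 := hmono h01 ht'1 ht'.le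
      simpa [mul_zero, Real.exp_zero, one_mul] using h2
    rw [hg0 x, ind_self] at hle
    nlinarith [Real.exp_pos (Cst Q * t'), hgpos t' ht'.le x]
  have Sstep : ∀ z w : X, (∀ s, 0 < s → 0 < g s z) → z ≠ w →
      0 < conjOp Q (ind ({z} : Set X)) w → (∀ s, 0 < s → 0 < g s w) := by
    intro z w hz hzw hpos t' ht'
    by_contra hcon
    have hgw : g t' w = 0 := le_antisymm (not_lt.1 hcon) (hgpos t' ht'.le w)
    have hmono := expG_mono hQ hT x w (le_of_lt ht')
    have hzero : ∀ u ∈ Set.Ioo (0:ℝ) t', g u w = 0 := by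
      intro u hu
      have h1 : Real.exp (Cst Q * u) * g u w ≤ Real.exp (Cst Q * t') * g t' w :=
        hmono (Set.mem_Icc.2 ⟨hu.1.le, hu.2.le⟩) (Set.mem_Icc.2 ⟨ht'.le, le_refl t'⟩) hu.2.le
      rw [hgw, mul_zero] at h1
      have h2 : 0 ≤ Real.exp (Cst Q * u) * g u w :=
        mul_nonneg (Real.exp_pos _).le (hgpos u hu.1.le w)
      have h3 : Real.exp (Cst Q * u) * g u w = 0 := le_antisymm h1 h2
      rcases mul_eq_zero.1 h3 with h4 | h4
      · exact absurd h4 (Real.exp_pos _).ne'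
      · exact h4
    set u0 : ℝ := t' / 2 with hu0def
    have hu0 : u0 ∈ Set.Ioo (0:ℝ) t' := ⟨by positivity, by rw [hu0def]; linarith⟩
    have hEv : (fun s => g s w) =ᶠ[𝓝 u0] fun _ => 0 :=
      Filter.eventuallyEq_of_mem (isOpen_Ioo.mem_nhds hu0) hzero
    have hd1 : HasDerivAt (fun s => g s w) (conjOp Q (g u0) w) u0 := by
      have hmem : Set.Ici (0:ℝ) ∈ 𝓝 u0 :=
        Filter.mem_of_superset (isOpen_Ioi.mem_nhds hu0.1) Set.Ioi_subset_Ici_self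
      exact (hgd u0 hu0.1.le w).hasDerivAt hmem
    have hd2 : HasDerivAt (fun s => g s w) 0 u0 :=
      (hasDerivAt_const u0 (0:ℝ)).congr_of_eventuallyEq hEv
    have hQ0 : conjOp Q (g u0) w = 0 := hd1.unique hd2
    have hb := lQb_step_bound hQ (g u0) (hgpos u0 hu0.1.le) hzw
    rw [hQ0, hzero u0 hu0] at hb
    have hp : 0 < g u0 z * conjOp Q (ind ({z} : Set X)) w := mul_pos (hz u0 hu0.1) hpos
    rw [mul_zero] at hb
    linarith
  have reach_pos : ∀ w, upperReach Q w x → 0 < g t w := by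
    intro w hw
    obtain ⟨n, p, hp0, hpn, hp⟩ := hw
    have main : ∀ k, k ≤ n → ∀ s, 0 < s → 0 < g s (p (n - k)) := by
      intro k
      induction k with
      | zero => intro _; simpa [hpn] using Sbase
      | succ m ih =>
        intro hm
        have hmn : m ≤ n := by omega
        have ihm := ih hmn
        have hj : n - (m + 1) < n := by omega
        have hj1 : n - (m + 1) + 1 = n - m := by omega
        have hcond := hp (n - (m + 1)) hj
        rw [hj1] at hcond
        exact Sstep (p (n - m)) (p (n - (m + 1))) ihm hcond.1 hcond.2
    have := main n (le_refl n) t ht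
    simpa [hp0] using this
  constructor
  · intro hpos
    by_contra hn
    rw [show conjOp (T t) (ind {x}) y = g t y from rfl, vanish y hn] at hpos
    exact lt_irrefl 0 hpos
  · intro hr
    exact reach_pos y hr
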